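/- arXiv:1207.2547 — 8 statements merged into one kernel-verified Lean document; each statement's English description precedes it below -/
import Mathlib

section
/- Let ψ : G →+ H be a surjective homomorphism of additive commutative groups, and let R be a commutative ring with a G-grading 𝒜 : G → AddSubgroup R (i.e. GradedRing 𝒜). Then the ψ-coarsened family 𝒜_[ψ] : H → AddSubgroup R defined by 𝒜_[ψ] h = ⨆_{g ∈ ψ⁻¹(h)} 𝒜 g is an H-grading of R: it satisfies 1 ∈ 𝒜_[ψ] 0, 𝒜_[ψ] h * 𝒜_[ψ] h' ⊆ 𝒜_[ψ] (h + h'), and the components 𝒜_[ψ] h form an internal direct sum decomposition of R (i.e. GradedRing 𝒜_[ψ]). -/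
/-- Coarsening of a grading along a surjective group homomorphism `ψ`:
the component of degree `h` is the supremum of the components of the degrees
in the fibre `ψ ⁻¹' {h}`. -/
def AddSubgroup.coarsen {G H M : Type*} [AddCommGroup G] [AddCommGroup H]
    [AddCommGroup M] (ψ : G →+ H) (ℳ : G → AddSubgroup M) (h : H) : AddSubgroup M :=
  ⨆ g ∈ ψ ⁻¹' {h}, ℳ g

open DirectSum

section aux

variable {G H R : Type*} [AddCommGroup G] [AddCommGroup H]
    [DecidableEq G] [DecidableEq H] [CommRing R]
    (ψ : G →+ H) (𝒜 : G → AddSubgroup R) [GradedRing 𝒜]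

lemma le_coarsen (g : G) : 𝒜 g ≤ AddSubgroup.coarsen ψ 𝒜 (ψ g) :=
  le_biSup 𝒜 rfl

lemma le_coarsen' {g : G} {h : H} (hg : ψ g = h) : 𝒜 g ≤ AddSubgroup.coarsen ψ 𝒜 h :=
  hg ▸ le_coarsen ψ 𝒜 g

lemma coarsen_eq (h : H) :
    AddSubgroup.coarsen ψ 𝒜 h = ⨆ g : (ψ ⁻¹' {h} : Set G), 𝒜 g := by
  rw [AddSubgroup.coarsen, iSup_subtype]

lemma mem_coarsen_iff (h : H) (x : R) :
    x ∈ AddSubgroup.coarsen ψ 𝒜 h ↔ ∀ g : G, ψ g ≠ h → (decompose 𝒜 x g : R) = 0 := by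
  classical
  constructor
  · intro hx
    rw [coarsen_eq] at hx
    refine AddSubgroup.iSup_induction (x := x) _ hx (fun i y hy g hg => ?_)
      (fun g _ => by simp) (fun a b ha hb g hg => ?_)
    · exact decompose_of_mem_ne 𝒜 hy (fun e => hg (e ▸ i.2))
    · rw [decompose_add]
      simp [ha g hg, hb g hg]
  · intro hx
    rw [← DirectSum.sum_support_decompose 𝒜 x]
    refine AddSubgroup.sum_mem _ fun g _ => ?_
    by_cases hg : ψ g = h
    · exact le_coarsen' ψ 𝒜 hg (decompose 𝒜 x g).2
    · rw [hx g hg]; exact zero_mem _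

end aux

/-- The `ψ`-coarsening of a `G`-grading of a commutative ring `R` along a surjective
group homomorphism `ψ : G →+ H` is an `H`-grading of `R`: it contains `1` in degree `0`,
is multiplicative, and decomposes `R` as an internal direct sum. -/
theorem coarsening_of_gradedRing {G H R : Type*} [AddCommGroup G] [AddCommGroup H]
    [DecidableEq G] [DecidableEq H] [CommRing R]
    (ψ : G →+ H) (hψ : Function.Surjective ψ)
    (𝒜 : G → AddSubgroup R) [GradedRing 𝒜] :
    (1 : R) ∈ AddSubgroup.coarsen ψ 𝒜 (0 : H) ∧
    (∀ h h' : H, ∀ x ∈ AddSubgroup.coarsen ψ 𝒜 h, ∀ y ∈ AddSubgroup.coarsen ψ 𝒜 h',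
      x * y ∈ AddSubgroup.coarsen ψ 𝒜 (h + h')) ∧
    DirectSum.IsInternal (AddSubgroup.coarsen ψ 𝒜) := by
  classical
  refine ⟨le_coarsen' ψ 𝒜 (map_zero ψ) (SetLike.one_mem_graded 𝒜), ?_, ?_, ?_⟩
  · -- multiplicativity
    intro h h' x hx y hy
    rw [coarsen_eq] at hx hy
    refine AddSubgroup.iSup_induction
      (C := fun a => a * y ∈ AddSubgroup.coarsen ψ 𝒜 (h + h')) _ hx
      (fun i a ha => ?_) (by show (0:R) * y ∈ _; rw [zero_mul]; exact zero_mem _)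
      (fun a b pa pb => by show (a + b) * y ∈ _; rw [add_mul]; exact add_mem pa pb)
    refine AddSubgroup.iSup_induction
      (C := fun b => a * b ∈ AddSubgroup.coarsen ψ 𝒜 (h + h')) _ hy
      (fun j b hb => ?_) (by show a * (0:R) ∈ _; rw [mul_zero]; exact zero_mem _)
      (fun b c pb pc => by show a * (b + c) ∈ _; rw [mul_add]; exact add_mem pb pc)
    refine le_coarsen' ψ 𝒜 ?_ (SetLike.mul_mem_graded ha hb)
    rw [map_add]
    exact congrArg₂ (· + ·) i.2 j.2
  · -- injectivity
    rw [injective_iff_map_eq_zero]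
    intro x hx
    have hx0 : ∑ h ∈ DFinsupp.support x, ((x h : R)) = 0 := by
      rw [← hx]
      conv_rhs => rw [← DirectSum.sum_support_of x]
      rw [map_sum]
      simp [DirectSum.coeAddMonoidHom_of]
    refine DFinsupp.ext fun h => ?_
    have key : (x h : R) = 0 := by
      have hd : decompose 𝒜 ((x h : R)) = 0 := by
        refine DFinsupp.ext fun g => Subtype.ext ?_
        by_cases hgh : ψ g = h
        · have h1 : ∑ h' ∈ DFinsupp.support x, (decompose 𝒜 ((x h' : R)) g : R) = 0 := by
            have h2 := congrArg (decompose 𝒜) hx0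
            rw [decompose_sum, decompose_zero] at h2
            have h3 := congrArg (fun f : ⨁ g, 𝒜 g => ((f g : 𝒜 g) : R)) h2
            dsimp only at h3
            rw [DFinsupp.finset_sum_apply] at h3
            simpa [AddSubmonoidClass.coe_finset_sum] using h3
          rw [Finset.sum_eq_single h (fun b _ hb => by
              exact (mem_coarsen_iff ψ 𝒜 b (x b)).mp (x b).2 g (fun e => hb (e ▸ hgh)))
            (fun hns => by
              rw [DFinsupp.notMem_support_iff.mp hns]
              simp)] at h1
          simpa using h1
        · simpa using (mem_coarsen_iff ψ 𝒜 h (x h)).mp (x h).2 g hgh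
      have := congrArg (decompose 𝒜).symm hd
      simpa using this
    exact Subtype.ext key
  · -- surjectivity
    intro r
    refine ⟨∑ g ∈ DFinsupp.support (decompose 𝒜 r),
      DirectSum.of (fun h => AddSubgroup.coarsen ψ 𝒜 h) (ψ g)
        ⟨(decompose 𝒜 r g : R), le_coarsen ψ 𝒜 g (decompose 𝒜 r g).2⟩, ?_⟩
    rw [map_sum]
    simp only [DirectSum.coeAddMonoidHom_of]
    exact DirectSum.sum_support_decompose 𝒜 r
end

section
/- Let ψ : G →+ H be a surjective homomorphism of additive commutative groups, R a commutative ring with G-grading 𝒜, and M an R-module with a G-graded module structure ℳ : G → AddSubgroup M (so M is the internal direct sum of the ℳ g and 𝒜 g • ℳ g' ⊆ ℳ (g+g')). Then the ψ-coarsened family ℳ_[ψ] h = ⨆_{g ∈ ψ⁻¹(h)} ℳ g makes M an H-graded module over the ψ-coarsened ring grading: M is the internal direct sum of the ℳ_[ψ] h and (⨆_{g ∈ ψ⁻¹(h)} 𝒜 g) • ℳ_[ψ] h' ⊆ ℳ_[ψ] (h + h'). -/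
private lemma aux_disjoint_biSup_compl {ι R N : Type*} [DecidableEq ι] [Ring R]
    [AddCommGroup N] [Module R N] {p : ι → Submodule R N} (h : iSupIndep p)
    (S : Set ι) [DecidablePred (· ∈ S)] :
    Disjoint (⨆ i ∈ S, p i) (⨆ i ∈ Sᶜ, p i) := by
  rw [Submodule.disjoint_def]
  intro x hx hx'
  rw [Submodule.mem_biSup_iff_exists_dfinsupp] at hx hx'
  obtain ⟨f, hf⟩ := hx
  obtain ⟨g, hg⟩ := hx'
  have hinj : Function.Injective (DFinsupp.lsum ℕ fun i => (p i).subtype) :=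
    h.dfinsupp_lsum_injective
  have : DFinsupp.lsum ℕ (fun i => (p i).subtype) (f.filter (· ∈ S) - g.filter (· ∈ Sᶜ)) = 0 := by
    rw [map_sub, hf, hg, sub_self]
  have h0 := hinj (a₂ := 0) (by rw [this, map_zero])
  have hfS : f.filter (· ∈ S) = 0 := by
    ext i
    by_cases hi : i ∈ S
    · have h0i := DFunLike.congr_fun h0 i
      simp only [DFinsupp.sub_apply, DFinsupp.zero_apply, sub_eq_zero] at h0i
      simp only [DFinsupp.filter_apply, hi, if_true, Set.mem_compl_iff, not_true,
        if_false, if_neg] at h0i ⊢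
      simp [h0i]
    · simp [DFinsupp.filter_apply, hi]
  rw [← hf, hfS, map_zero]

private lemma aux_iSupIndep_fiber {ι κ R N : Type*} [DecidableEq ι] [Ring R] [AddCommGroup N]
    [Module R N] {p : ι → Submodule R N} (h : iSupIndep p) (f : ι → κ) :
    iSupIndep fun k => ⨆ i ∈ f ⁻¹' {k}, p i := by
  classical
  intro k
  refine Disjoint.mono_right ?_ (aux_disjoint_biSup_compl h (f ⁻¹' {k}))
  refine iSup₂_le fun k' hk' => iSup₂_le fun i hi => ?_
  refine le_iSup₂ (f := fun i (_ : i ∈ (f ⁻¹' {k})ᶜ) => p i) i ?_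
  simp only [Set.mem_compl_iff, Set.mem_preimage, Set.mem_singleton_iff] at hi ⊢
  rw [hi]; exact hk'

/-- The `ψ`-coarsening of a `G`-graded module structure on an `R`-module `M` is an
`H`-graded module structure over the `ψ`-coarsened ring grading: `M` is the internal
direct sum of the coarsened components, and they are compatible with the multiplication
by the coarsened components of `R`. -/
theorem coarsening_of_gradedModule {G H R M : Type*} [AddCommGroup G] [AddCommGroup H]
    [DecidableEq G] [DecidableEq H] [CommRing R] [AddCommGroup M] [Module R M]
    (ψ : G →+ H) (hψ : Function.Surjective ψ)
    (𝒜 : G → AddSubgroup R) [GradedRing 𝒜]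
    (ℳ : G → AddSubgroup M)
    (hM : DirectSum.IsInternal ℳ)
    (hMsmul : ∀ g g' : G, ∀ r ∈ 𝒜 g, ∀ m ∈ ℳ g', r • m ∈ ℳ (g + g')) :
    DirectSum.IsInternal (AddSubgroup.coarsen ψ ℳ) ∧
    (∀ h h' : H, ∀ r ∈ AddSubgroup.coarsen ψ 𝒜 h, ∀ m ∈ AddSubgroup.coarsen ψ ℳ h',
      r • m ∈ AddSubgroup.coarsen ψ ℳ (h + h')) := by
  classical
  have key : ∀ g : G, ℳ g ≤ AddSubgroup.coarsen ψ ℳ (ψ g) := fun g =>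
    le_iSup₂ (f := fun g' (_ : g' ∈ ψ ⁻¹' {ψ g}) => ℳ g') g rfl
  constructor
  · -- internality of the coarsened family
    have hM' : DirectSum.IsInternal fun g => (ℳ g).toIntSubmodule := hM
    rw [DirectSum.isInternal_submodule_iff_iSupIndep_and_iSup_eq_top] at hM'
    obtain ⟨hindep, htop⟩ := hM'
    have hcoe : ∀ h : H, AddSubgroup.toIntSubmodule (AddSubgroup.coarsen ψ ℳ h)
        = ⨆ g ∈ ψ ⁻¹' {h}, AddSubgroup.toIntSubmodule (ℳ g) := by
      intro h
      unfold AddSubgroup.coarsen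
      rw [OrderIso.map_iSup]
      exact iSup_congr fun g => by rw [OrderIso.map_iSup]
    suffices hs : DirectSum.IsInternal fun h => AddSubgroup.toIntSubmodule
        (AddSubgroup.coarsen ψ ℳ h) from hs
    apply DirectSum.isInternal_submodule_of_iSupIndep_of_iSup_eq_top
    · simp only [hcoe]
      exact aux_iSupIndep_fiber hindep ψ
    · rw [eq_top_iff, ← htop]
      refine iSup_le fun g => le_iSup_of_le (ψ g) ?_
      rw [hcoe]
      exact le_iSup₂ (f := fun g' (_ : g' ∈ ψ ⁻¹' {ψ g}) => AddSubgroup.toIntSubmodule (ℳ g')) g rfl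
  · intro h h' r hr m hm
    rw [AddSubgroup.coarsen, iSup_subtype'] at hr hm
    refine AddSubgroup.iSup_induction _ hr
      (C := fun x => x • m ∈ AddSubgroup.coarsen ψ ℳ (h + h')) ?_ ?_ ?_
    · rintro ⟨g, hg⟩ x hx
      refine AddSubgroup.iSup_induction _ hm
        (C := fun y => x • y ∈ AddSubgroup.coarsen ψ ℳ (h + h')) ?_ ?_ ?_
      · rintro ⟨g', hg'⟩ y hy
        have heq : ψ (g + g') = h + h' := by
          simp only [Set.mem_preimage, Set.mem_singleton_iff] at hg hg'
          rw [map_add, hg, hg']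
        exact heq ▸ key (g + g') (hMsmul g g' x hx y hy)
      · simpa using (AddSubgroup.coarsen ψ ℳ (h + h')).zero_mem
      · intro a b ha hb
        simpa [smul_add] using add_mem ha hb
    · simpa using (AddSubgroup.coarsen ψ ℳ (h + h')).zero_mem
    · intro a b ha hb
      simpa [add_smul] using add_mem ha hb
end

section
/- Let G, H be additive commutative groups, ψ : G →+ H a surjective group homomorphism with FINITE kernel, R a commutative ring with G-grading 𝒜, and M, N G-graded R-modules with gradings ℳ, 𝒩. Let f : M →ₗ[R] N be an R-linear map, and suppose there is a finite subset S ⊆ H such that for every h ∈ H, f maps ⨆_{g ∈ ψ⁻¹(h)} ℳ g into ∑_{l ∈ S} ⨆_{k ∈ ψ⁻¹(h+l)} 𝒩 k. Then there is a finite subset T ⊆ G such that for every g ∈ G, f maps ℳ g into ∑_{t ∈ T} 𝒩 (g + t). -/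
/-- If `ψ : G →+ H` is surjective with finite kernel, `M`, `N` are `G`-graded `R`-modules,
and the `R`-linear map `f : M → N` satisfies, for some finite `S ⊆ H`,
`f(ℳ_[ψ] h) ⊆ ∑_{l ∈ S} 𝒩_[ψ] (h + l)` for all `h ∈ H`, then there is a finite `T ⊆ G`
with `f(ℳ g) ⊆ ∑_{t ∈ T} 𝒩 (g + t)` for all `g ∈ G`. -/
theorem exists_finite_degree_set_of_coarsened {G H R M N : Type*}
    [AddCommGroup G] [AddCommGroup H] [DecidableEq G] [DecidableEq H] [CommRing R]
    [AddCommGroup M] [Module R M] [AddCommGroup N] [Module R N]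
    (ψ : G →+ H) (hψ : Function.Surjective ψ) (hker : (ψ.ker : Set G).Finite)
    (𝒜 : G → AddSubgroup R) [GradedRing 𝒜]
    (ℳ : G → AddSubgroup M) (𝒩 : G → AddSubgroup N)
    (hM : DirectSum.IsInternal ℳ)
    (hMsmul : ∀ g g' : G, ∀ r ∈ 𝒜 g, ∀ m ∈ ℳ g', r • m ∈ ℳ (g + g'))
    (hN : DirectSum.IsInternal 𝒩)
    (hNsmul : ∀ g g' : G, ∀ r ∈ 𝒜 g, ∀ n ∈ 𝒩 g', r • n ∈ 𝒩 (g + g'))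
    (f : M →ₗ[R] N) (S : Finset H)
    (hf : ∀ h : H, ∀ x ∈ AddSubgroup.coarsen ψ ℳ h,
      f x ∈ ⨆ l ∈ S, AddSubgroup.coarsen ψ 𝒩 (h + l)) :
    ∃ T : Finset G, ∀ g : G, ∀ x ∈ ℳ g, f x ∈ ⨆ t ∈ T, 𝒩 (g + t) := by
  classical
  choose σ hσ using hψ
  refine ⟨Finset.image (fun p : H × G => σ p.1 + p.2) (S ×ˢ hker.toFinset), fun g x hx => ?_⟩
  have hx' : x ∈ AddSubgroup.coarsen ψ ℳ (ψ g) :=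
    (le_iSup₂ (f := fun g' (_ : g' ∈ ψ ⁻¹' {ψ g}) => ℳ g') g rfl) hx
  have := hf (ψ g) x hx'
  refine SetLike.le_def.mp (iSup₂_le fun l hl => iSup₂_le fun k hk => ?_) this
  have hklg : ψ (k - g) = l := by
    simp only [Set.mem_preimage, Set.mem_singleton_iff] at hk
    rw [map_sub, hk]; abel
  have hmem : k - g ∈ Finset.image (fun p : H × G => σ p.1 + p.2) (S ×ˢ hker.toFinset) := by
    refine Finset.mem_image.mpr ⟨⟨l, k - g - σ l⟩, ?_, by show σ l + (k - g - σ l) = k - g; exact add_sub_cancel _ _⟩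
    refine Finset.mem_product.mpr ⟨hl, Set.Finite.mem_toFinset _ |>.mpr ?_⟩
    simp [AddMonoidHom.mem_ker, map_sub, hklg, hσ l]
  have : 𝒩 k ≤ ⨆ t ∈ Finset.image (fun p : H × G => σ p.1 + p.2) (S ×ˢ hker.toFinset),
      𝒩 (g + t) := by
    have := le_iSup₂ (f := fun t (_ : t ∈ Finset.image (fun p : H × G => σ p.1 + p.2)
      (S ×ˢ hker.toFinset)) => 𝒩 (g + t)) (k - g) hmem
    simpa using this
  exact this
end

section
/- Let G, H be additive commutative groups, ψ : G →+ H a surjective group homomorphism with FINITE kernel, R a commutative ring with G-grading 𝒜, and M, N G-graded R-modules with gradings ℳ, 𝒩. Fix h ∈ H and let f : M →ₗ[R] N be homogeneous of degree h with respect to the ψ-coarsened gradings, i.e. f maps ⨆_{g ∈ ψ⁻¹(h')} ℳ g into ⨆_{k ∈ ψ⁻¹(h'+h)} 𝒩 k for every h' ∈ H. Then f lies in the (finite) sum, over g ∈ ψ⁻¹(h), of the submodules of Hom_R(M,N) consisting of the maps homogeneous of degree g (maps sending ℳ g' into 𝒩 (g'+g) for all g' ∈ G). -/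
/-- The additive subgroup of `Hom_R(M,N)` consisting of the `R`-linear maps that are
homogeneous of degree `g` with respect to the gradings `ℳ` and `𝒩`. -/
def homOfDegree {R M N G : Type*} [CommRing R] [AddCommGroup M] [Module R M]
    [AddCommGroup N] [Module R N] [AddCommGroup G]
    (ℳ : G → AddSubgroup M) (𝒩 : G → AddSubgroup N) (g : G) :
    AddSubgroup (M →ₗ[R] N) where
  carrier := {f | ∀ g' : G, ∀ x ∈ ℳ g', f x ∈ 𝒩 (g' + g)}
  add_mem' := fun ha hb g' x hx => by
    simpa using add_mem (ha g' x hx) (hb g' x hx)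
  zero_mem' := fun g' x hx => by simpa using zero_mem _
  neg_mem' := fun ha g' x hx => by simpa using neg_mem (ha g' x hx)

set_option maxHeartbeats 1000000
set_option synthInstance.maxHeartbeats 400000

/-- If `ψ : G →+ H` is surjective with finite kernel and `f : M →ₗ[R] N` is homogeneous of
degree `h` with respect to the `ψ`-coarsened gradings, then `f` lies in the sum, over
`g ∈ ψ ⁻¹' {h}`, of the subgroups of maps homogeneous of degree `g`. -/
theorem coarsened_homogeneous_mem_sum {G H R M N : Type*}
    [AddCommGroup G] [AddCommGroup H] [DecidableEq G] [DecidableEq H] [CommRing R]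
    [AddCommGroup M] [Module R M] [AddCommGroup N] [Module R N]
    (ψ : G →+ H) (hψ : Function.Surjective ψ) (hker : (ψ.ker : Set G).Finite)
    (𝒜 : G → AddSubgroup R) [GradedRing 𝒜]
    (ℳ : G → AddSubgroup M) (𝒩 : G → AddSubgroup N)
    (hM : DirectSum.IsInternal ℳ)
    (hMsmul : ∀ g g' : G, ∀ r ∈ 𝒜 g, ∀ m ∈ ℳ g', r • m ∈ ℳ (g + g'))
    (hN : DirectSum.IsInternal 𝒩)
    (hNsmul : ∀ g g' : G, ∀ r ∈ 𝒜 g, ∀ n ∈ 𝒩 g', r • n ∈ 𝒩 (g + g'))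
    (h : H) (f : M →ₗ[R] N)
    (hf : f ∈ homOfDegree (AddSubgroup.coarsen ψ ℳ) (AddSubgroup.coarsen ψ 𝒩) h) :
    f ∈ ⨆ g ∈ ψ ⁻¹' {h}, homOfDegree (R := R) ℳ 𝒩 g := by
  classical
  haveI : DirectSum.Decomposition ℳ := hM.chooseDecomposition
  haveI : DirectSum.Decomposition 𝒩 := hN.chooseDecomposition
  -- fibres of ψ are finite
  have fibfin : ∀ c : H, (ψ ⁻¹' {c}).Finite := by
    intro c
    obtain ⟨g₀, hg₀⟩ := hψ c
    have : ψ ⁻¹' {c} ⊆ (fun k => g₀ + k) '' (ψ.ker : Set G) := by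
      intro g hg
      rw [Set.mem_preimage, Set.mem_singleton_iff] at hg
      refine ⟨g - g₀, ?_, by show g₀ + (g - g₀) = g; rw [add_comm]; exact sub_add_cancel g g₀⟩
      simp only [SetLike.mem_coe, AddMonoidHom.mem_ker, map_sub, hg₀, hg, sub_self]
    exact ((hker.image _).subset this)
  -- the projection onto the `k`-th component of `N`
  set π : G → N →+ N := fun k => AddMonoidHom.mk'
      (fun n => (DirectSum.decompose 𝒩 n k : N))
      (fun a b => by simp [DirectSum.decompose_add]) with hπ
  have πmem : ∀ k n, π k n ∈ 𝒩 k := fun k n => SetLike.coe_mem _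
  have πsame : ∀ {k n}, n ∈ 𝒩 k → π k n = n := fun {k n} hn =>
    DirectSum.decompose_of_mem_same 𝒩 hn
  have πne : ∀ {j k n}, n ∈ 𝒩 j → j ≠ k → π k n = 0 := fun {j k n} hn hjk =>
    DirectSum.decompose_of_mem_ne 𝒩 hn hjk
  -- projections commute with multiplication by homogeneous elements
  have πsmul : ∀ (a : G) (r : R), r ∈ 𝒜 a → ∀ (k : G) (n : N),
      π (a + k) (r • n) = r • π k n := by
    intro a r hr k n
    induction n using DirectSum.Decomposition.inductionOn 𝒩 with
    | zero => simp
    | @homogeneous j x =>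
      have hx : (x : N) ∈ 𝒩 j := x.2
      have hrx : r • (x : N) ∈ 𝒩 (a + j) := hNsmul a j r hr _ hx
      by_cases hjk : j = k
      · subst hjk
        rw [πsame hrx, πsame hx]
      · rw [πne hrx (fun e => hjk (add_left_cancel e)), πne hx hjk, smul_zero]
    | add m m' hm hm' =>
      rw [smul_add, map_add, map_add, hm, hm', smul_add]
  -- summing the projections over a fibre recovers elements of the coarsened component
  have sum_proj : ∀ (c : H) (x : N), x ∈ AddSubgroup.coarsen ψ 𝒩 c →
      ∑ k ∈ (fibfin c).toFinset, π k x = x := by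
    intro c x hx
    rw [AddSubgroup.coarsen, iSup_subtype'] at hx
    refine AddSubgroup.iSup_induction
      (C := fun y => ∑ k ∈ (fibfin c).toFinset, π k y = y) _ hx
      (fun j y hyj => ?_) (by simp) ?_
    · obtain ⟨j, hj⟩ := j
      refine (Finset.sum_eq_single j (fun k _ hk => πne hyj (Ne.symm hk)) ?_).trans (πsame hyj)
      intro hjmem
      exact absurd ((fibfin c).mem_toFinset.mpr hj) hjmem
    · intro x y hx hy
      simp only [map_add, Finset.sum_add_distrib, hx, hy]
  -- the graded pieces of `f`, additively
  set Fa : G → (M →+ N) := fun g =>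
    (DirectSum.toAddMonoid (fun g' : G =>
      ((π (g' + g)).comp f.toAddMonoidHom).comp (ℳ g').subtype)).comp
      (DirectSum.decomposeAddEquiv ℳ).toAddMonoidHom with hFa
  have Faapply : ∀ (g g' : G) (m : M), m ∈ ℳ g' → Fa g m = π (g' + g) (f m) := by
    intro g g' m hm
    show (DirectSum.toAddMonoid _) ((DirectSum.decomposeAddEquiv ℳ) m) = _
    rw [DirectSum.decomposeAddEquiv_apply, DirectSum.decompose_of_mem ℳ hm,
      DirectSum.toAddMonoid_of]
    rfl
  have Fasmul : ∀ (g : G) (r : R), ∀ m : M, Fa g (r • m) = r • Fa g m := by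
    intro g r
    induction r using DirectSum.Decomposition.inductionOn 𝒜 with
    | zero => intro m; rw [zero_smul, zero_smul, map_zero]
    | @homogeneous a ra =>
      have hra : (ra : R) ∈ 𝒜 a := ra.2
      intro m
      induction m using DirectSum.Decomposition.inductionOn ℳ with
      | zero => rw [smul_zero, map_zero, smul_zero]
      | @homogeneous g' x =>
        have hx : (x : M) ∈ ℳ g' := x.2
        have hrx : (ra : R) • (x : M) ∈ ℳ (a + g') := hMsmul a g' _ hra _ hx
        rw [Faapply g (a + g') _ hrx, Faapply g g' _ hx, map_smul, add_assoc,
          πsmul a _ hra]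
      | add m m' hm hm' =>
        rw [smul_add, map_add, map_add, hm, hm', smul_add]
    | add r r' hr hr' =>
      intro m
      rw [add_smul, add_smul, map_add, hr m, hr' m]
  set F : G → (M →ₗ[R] N) := fun g =>
    { toFun := Fa g
      map_add' := fun a b => map_add _ a b
      map_smul' := fun r m => Fasmul g r m } with hF
  have Fmem : ∀ g : G, F g ∈ homOfDegree (R := R) ℳ 𝒩 g := by
    intro g g' x hx
    show Fa g x ∈ 𝒩 (g' + g)
    rw [Faapply g g' x hx]
    exact πmem _ _
  -- f is the sum of its graded pieces
  have fsum : f = ∑ g ∈ (fibfin h).toFinset, F g := by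
    apply LinearMap.ext
    intro m
    induction m using DirectSum.Decomposition.inductionOn ℳ with
    | zero => simp
    | @homogeneous g' x =>
      have hx : (x : M) ∈ ℳ g' := x.2
      rw [LinearMap.sum_apply]
      have hcongr : ∀ g ∈ (fibfin h).toFinset, F g (x : M) = π (g' + g) (f x) :=
        fun g _ => Faapply g g' x hx
      rw [Finset.sum_congr rfl hcongr]
      -- reindex the sum over the fibre of `ψ g' + h`
      have hmap : (fibfin h).toFinset.map (addLeftEmbedding g') =
          (fibfin (ψ g' + h)).toFinset := by
        ext k
        simp only [Finset.mem_map, Set.Finite.mem_toFinset, Set.mem_preimage,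
          Set.mem_singleton_iff, addLeftEmbedding_apply]
        constructor
        · rintro ⟨g, hg, rfl⟩; rw [map_add, hg]
        · intro hk
          refine ⟨k - g', ?_, by rw [add_comm]; exact sub_add_cancel k g'⟩
          rw [map_sub, hk]
          abel
      have hsp := sum_proj (ψ g' + h) (f x) (hf (ψ g') x
        (AddSubgroup.mem_iSup_of_mem g' (AddSubgroup.mem_iSup_of_mem rfl hx)))
      rw [← hmap, Finset.sum_map] at hsp
      simpa using hsp.symm
    | add m m' hm hm' =>
      simp only [map_add, hm, hm']
  rw [fsum]
  refine AddSubgroup.sum_mem _ (fun g hg => ?_)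
  have hgfib : g ∈ ψ ⁻¹' {h} := (fibfin h).mem_toFinset.mp hg
  exact le_iSup₂ (f := fun g (_ : g ∈ ψ ⁻¹' {h}) => homOfDegree (R := R) ℳ 𝒩 g) g hgfib (Fmem g)
end

section
/- Let G be an additive commutative group, R a commutative ring with G-grading 𝒜, and M, N G-graded R-modules with gradings ℳ, 𝒩. Then the family of additive subgroups of Hom_R(M,N) indexed by g ∈ G, where the g-th subgroup consists of the R-linear maps homogeneous of degree g (maps sending ℳ g' into 𝒩 (g'+g) for all g' ∈ G), is independent: if (f_g)_{g∈G} is a finitely supported family with f_g homogeneous of degree g for each g and ∑_{g} f_g = 0, then f_g = 0 for every g. -/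
set_option maxHeartbeats 1000000 in
set_option synthInstance.maxHeartbeats 400000 in
/-- The family of subgroups of homogeneous maps of degree `g` inside `Hom_R(M,N)` is
independent: if a finitely supported family `(f_g)_{g ∈ G}` with `f_g` homogeneous of
degree `g` sums to zero, then each `f_g` is zero. -/
theorem homOfDegree_independent {G R M N : Type*}
    [AddCommGroup G] [DecidableEq G] [CommRing R]
    [AddCommGroup M] [Module R M] [AddCommGroup N] [Module R N]
    (𝒜 : G → AddSubgroup R) [GradedRing 𝒜]
    (ℳ : G → AddSubgroup M) (𝒩 : G → AddSubgroup N)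
    (hM : DirectSum.IsInternal ℳ)
    (hMsmul : ∀ g g' : G, ∀ r ∈ 𝒜 g, ∀ m ∈ ℳ g', r • m ∈ ℳ (g + g'))
    (hN : DirectSum.IsInternal 𝒩)
    (hNsmul : ∀ g g' : G, ∀ r ∈ 𝒜 g, ∀ n ∈ 𝒩 g', r • n ∈ 𝒩 (g + g'))
    (F : G →₀ (M →ₗ[R] N)) (hF : ∀ g : G, F g ∈ homOfDegree ℳ 𝒩 g)
    (hsum : (F.sum fun _ f => f) = 0) :
    ∀ g : G, F g = 0 := by
  have key : ∀ g0 g' : G, ∀ x, ∀ _hx : x ∈ ℳ g', F g0 x = 0 := by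
    intro g0 g' x hx
    by_cases hg0 : g0 ∈ F.support
    · set z : DirectSum G fun c => 𝒩 c :=
        ∑ g ∈ F.support, DirectSum.of (fun c => (𝒩 c : AddSubgroup N)) (g' + g)
          ⟨F g x, hF g g' x hx⟩ with hz
      have h1 : ∑ g ∈ F.support, F g x = 0 := by
        have h2 := DFunLike.congr_fun hsum x
        rw [Finsupp.sum] at h2
        simpa using h2
      have hzero : DirectSum.coeAddMonoidHom 𝒩 z = 0 := by
        rw [hz, map_sum]
        simp only [DirectSum.coeAddMonoidHom_of]
        exact h1
      have hz0 : z = 0 := hN.injective (by rw [hzero, map_zero])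
      have hcomp := DFunLike.congr_fun hz0 (g' + g0)
      rw [hz, DFinsupp.finset_sum_apply, DirectSum.zero_apply] at hcomp
      have hval := Finset.sum_eq_single_of_mem (s := F.support)
        (f := fun a => (DirectSum.of (fun c => ((𝒩 c : AddSubgroup N) : Type _)) (g' + a)
          ⟨F a x, hF a g' x hx⟩) (g' + g0)) g0 hg0
        (fun g _ hne => DirectSum.of_eq_of_ne _ _ _ (fun h => hne (add_left_cancel h.symm)))
      rw [hval] at hcomp
      simp only [DirectSum.of_eq_same] at hcomp
      exact Subtype.ext_iff.mp hcomp
    · rw [Finsupp.notMem_support_iff.mp hg0, LinearMap.zero_apply]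
  intro g0
  have hext : (F g0).toAddMonoidHom.comp (DirectSum.coeAddMonoidHom ℳ) = 0 := by
    refine DirectSum.addHom_ext fun i y => ?_
    simpa using key g0 i y y.2
  ext x
  obtain ⟨w, rfl⟩ := hM.surjective x
  exact DFunLike.congr_fun hext w
end

section
/- Let G, H be additive commutative groups, ψ : G →+ H a surjective group homomorphism, R a commutative ring with G-grading 𝒜, and M, N G-graded R-modules with gradings ℳ, 𝒩. Assume M is finitely generated as an R-module. Then the sum, over h ∈ H, of the subgroups of Hom_R(M,N) of maps homogeneous of degree h with respect to the ψ-coarsened gradings (maps sending ⨆_{g ∈ ψ⁻¹(h')} ℳ g into ⨆_{k ∈ ψ⁻¹(h'+h)} 𝒩 k for all h' ∈ H) is equal to the sum, over g ∈ G, of the subgroups of maps homogeneous of degree g with respect to the original gradings (maps sending ℳ g' into 𝒩 (g'+g) for all g' ∈ G). -/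
open DirectSum
set_option synthInstance.maxHeartbeats 1000000
set_option maxHeartbeats 1000000
set_option linter.unusedSectionVars false

section Aux

variable {G R M N : Type*} [AddCommGroup G] [DecidableEq G] [CommRing R]
  [AddCommGroup M] [Module R M] [AddCommGroup N] [Module R N]
  (𝒜 : G → AddSubgroup R) [GradedRing 𝒜]
  (ℳ : G → AddSubgroup M) (𝒩 : G → AddSubgroup N)
  [DirectSum.Decomposition ℳ] [DirectSum.Decomposition 𝒩]

lemma decompose_smul_coe
    (hNsmul : ∀ g g' : G, ∀ r ∈ 𝒜 g, ∀ n ∈ 𝒩 g', r • n ∈ 𝒩 (g + g'))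
    {a : G} {r : R} (hr : r ∈ 𝒜 a) (y : N) (k : G) :
    ((DirectSum.decompose 𝒩 (r • y) (a + k)) : N)
      = r • ((DirectSum.decompose 𝒩 y k) : N) := by
  induction y using DirectSum.Decomposition.inductionOn 𝒩 with
  | zero => simp
  | @homogeneous k' y =>
    have hy : (y : N) ∈ 𝒩 k' := y.2
    have hry : r • (y : N) ∈ 𝒩 (a + k') := hNsmul a k' r hr y hy
    by_cases hk : k' = k
    · subst hk
      rw [DirectSum.decompose_of_mem_same 𝒩 hry, DirectSum.decompose_of_mem_same 𝒩 hy]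
    · rw [DirectSum.decompose_of_mem_ne 𝒩 hry (by
        intro h; exact hk (by exact add_left_cancel h)),
        DirectSum.decompose_of_mem_ne 𝒩 hy hk, smul_zero]
  | add y y' hy hy' =>
    rw [smul_add, DirectSum.decompose_add, DFinsupp.add_apply, AddSubgroup.coe_add, hy, hy',
      DirectSum.decompose_add, DFinsupp.add_apply, AddSubgroup.coe_add, smul_add]

/-- The additive component of degree `g` of a linear map. -/
noncomputable def homComponentAux (f : M →ₗ[R] N) (g : G) : M →+ N :=
  (DirectSum.toAddMonoid (fun g' : G =>
      { toFun := fun x : ℳ g' => ((DirectSum.decompose 𝒩 (f x)) (g' + g) : N)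
        map_zero' := by simp
        map_add' := fun x y => by
          simp [map_add] })).comp
    (DirectSum.decomposeAddEquiv ℳ).toAddMonoidHom

lemma homComponentAux_apply_of_mem (f : M →ₗ[R] N) (g : G) {g' : G} {x : M}
    (hx : x ∈ ℳ g') :
    homComponentAux ℳ 𝒩 f g x = ((DirectSum.decompose 𝒩 (f x)) (g' + g) : N) := by
  simp only [homComponentAux, AddMonoidHom.comp_apply, AddEquiv.coe_toAddMonoidHom,
    DirectSum.decomposeAddEquiv_apply, DirectSum.decompose_of_mem ℳ hx,
    DirectSum.toAddMonoid_of, AddMonoidHom.coe_mk, ZeroHom.coe_mk]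

/-- The component of degree `g` of a linear map, as a linear map. -/
noncomputable def homComponent
    (hMsmul : ∀ g g' : G, ∀ r ∈ 𝒜 g, ∀ m ∈ ℳ g', r • m ∈ ℳ (g + g'))
    (hNsmul : ∀ g g' : G, ∀ r ∈ 𝒜 g, ∀ n ∈ 𝒩 g', r • n ∈ 𝒩 (g + g'))
    (f : M →ₗ[R] N) (g : G) : M →ₗ[R] N where
  toFun := homComponentAux ℳ 𝒩 f g
  map_add' := map_add _
  map_smul' := by
    intro r x
    simp only [RingHom.id_apply]
    revert x
    induction r using DirectSum.Decomposition.inductionOn 𝒜 with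
    | zero => intro x; simp
    | @homogeneous a r =>
      intro x
      induction x using DirectSum.Decomposition.inductionOn ℳ with
      | zero => simp
      | @homogeneous g' x =>
        have hx : (x : M) ∈ ℳ g' := x.2
        have hrx : (r : R) • (x : M) ∈ ℳ (a + g') := hMsmul a g' r r.2 x hx
        rw [homComponentAux_apply_of_mem ℳ 𝒩 f g hrx,
          homComponentAux_apply_of_mem ℳ 𝒩 f g hx, add_assoc,
          f.map_smul, decompose_smul_coe 𝒜 𝒩 hNsmul r.2]
      | add x x' hx hx' =>
        rw [smul_add, map_add, hx, hx', map_add, smul_add]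
    | add r r' hr hr' =>
      intro x
      rw [add_smul, map_add, hr, hr', add_smul]

lemma homComponent_mem
    (hMsmul : ∀ g g' : G, ∀ r ∈ 𝒜 g, ∀ m ∈ ℳ g', r • m ∈ ℳ (g + g'))
    (hNsmul : ∀ g g' : G, ∀ r ∈ 𝒜 g, ∀ n ∈ 𝒩 g', r • n ∈ 𝒩 (g + g'))
    (f : M →ₗ[R] N) (g : G) :
    homComponent 𝒜 ℳ 𝒩 hMsmul hNsmul f g ∈ homOfDegree (R := R) ℳ 𝒩 g := by
  intro g' x hx
  show homComponentAux ℳ 𝒩 f g x ∈ 𝒩 (g' + g)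
  rw [homComponentAux_apply_of_mem ℳ 𝒩 f g hx]
  exact SetLike.coe_mem _

end Aux

section Main

variable {G R M N : Type*} [AddCommGroup G] [DecidableEq G] [CommRing R]
  [AddCommGroup M] [Module R M] [AddCommGroup N] [Module R N]
  (𝒜 : G → AddSubgroup R) [GradedRing 𝒜]
  (ℳ : G → AddSubgroup M) (𝒩 : G → AddSubgroup N)
  [DirectSum.Decomposition ℳ] [DirectSum.Decomposition 𝒩]

lemma iSup_homOfDegree_eq_top
    (hMsmul : ∀ g g' : G, ∀ r ∈ 𝒜 g, ∀ m ∈ ℳ g', r • m ∈ ℳ (g + g'))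
    (hNsmul : ∀ g g' : G, ∀ r ∈ 𝒜 g, ∀ n ∈ 𝒩 g', r • n ∈ 𝒩 (g + g'))
    (hfin : Module.Finite R M) :
    (⨆ g : G, homOfDegree (R := R) ℳ 𝒩 g) = ⊤ := by
  classical
  rw [eq_top_iff]
  rintro f -
  obtain ⟨s, hs⟩ := hfin.fg_top
  set S : Finset G := s.biUnion (fun m =>
    (DirectSum.decompose ℳ m).support.biUnion (fun g' =>
      ((DirectSum.decompose 𝒩 (f ((DirectSum.decompose ℳ m g' : M)))).support.image
        (fun k => k - g')))) with hS
  have key : f = ∑ g ∈ S, homComponent 𝒜 ℳ 𝒩 hMsmul hNsmul f g := by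
    apply LinearMap.ext_on hs
    intro m hm
    have hm1 : (∑ g' ∈ (DirectSum.decompose ℳ m).support,
        ((DirectSum.decompose ℳ m g' : M))) = m :=
      DirectSum.sum_support_decompose ℳ m
    rw [← hm1, LinearMap.sum_apply]
    simp only [map_sum]
    rw [Finset.sum_comm]
    refine Finset.sum_congr rfl fun g' hg' => ?_
    -- each homComponent applied to the homogeneous piece
    have hpiece : ∀ g : G, homComponent 𝒜 ℳ 𝒩 hMsmul hNsmul f g
        ((DirectSum.decompose ℳ m g' : M))
        = ((DirectSum.decompose 𝒩 (f ((DirectSum.decompose ℳ m g' : M)))) (g' + g) : N) :=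
      fun g => homComponentAux_apply_of_mem ℳ 𝒩 f g (SetLike.coe_mem _)
    simp only [hpiece]
    set y : N := f ((DirectSum.decompose ℳ m g' : M)) with hy
    have himg : (DirectSum.decompose 𝒩 y).support ⊆ S.image (fun g => g' + g) := by
      intro k hk
      refine Finset.mem_image.mpr ⟨k - g', ?_, by abel⟩
      rw [hS]
      refine Finset.mem_biUnion.mpr ⟨m, hm, Finset.mem_biUnion.mpr ⟨g', hg', ?_⟩⟩
      exact Finset.mem_image.mpr ⟨k, hk, rfl⟩
    calc y = ∑ k ∈ (DirectSum.decompose 𝒩 y).support, ((DirectSum.decompose 𝒩 y) k : N) :=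
            (DirectSum.sum_support_decompose 𝒩 y).symm
      _ = ∑ k ∈ S.image (fun g => g' + g), ((DirectSum.decompose 𝒩 y) k : N) := by
            refine Finset.sum_subset (f := fun k => ((DirectSum.decompose 𝒩 y) k : N)) himg fun k _ hk => ?_
            simp only [DFinsupp.notMem_support_iff.mp hk, ZeroMemClass.coe_zero]
      _ = ∑ g ∈ S, ((DirectSum.decompose 𝒩 y) (g' + g) : N) := by
            rw [Finset.sum_image]
            intro a _ b _ hab
            exact add_left_cancel hab
  rw [key]
  exact AddSubgroup.sum_mem _ fun g _ =>
    AddSubgroup.mem_iSup_of_mem g (homComponent_mem 𝒜 ℳ 𝒩 hMsmul hNsmul f g)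

end Main

lemma homOfDegree_le_coarsen {G H R M N : Type*}
    [AddCommGroup G] [AddCommGroup H] [CommRing R]
    [AddCommGroup M] [Module R M] [AddCommGroup N] [Module R N]
    (ψ : G →+ H) (ℳ : G → AddSubgroup M) (𝒩 : G → AddSubgroup N) (g : G) :
    homOfDegree (R := R) ℳ 𝒩 g
      ≤ homOfDegree (R := R) (AddSubgroup.coarsen ψ ℳ) (AddSubgroup.coarsen ψ 𝒩) (ψ g) := by
  intro f hf h' x hx
  have hle : AddSubgroup.coarsen ψ ℳ h'
      ≤ (AddSubgroup.coarsen ψ 𝒩 (h' + ψ g)).comap f.toAddMonoidHom := by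
    refine iSup_le fun g'' => iSup_le fun hg'' => fun y hy => ?_
    simp only [AddSubgroup.mem_comap, LinearMap.toAddMonoidHom_coe]
    have h1 : f y ∈ 𝒩 (g'' + g) := hf g'' y hy
    have h2 : ψ (g'' + g) = h' + ψ g := by
      rw [map_add, Set.mem_preimage, Set.mem_singleton_iff] at *
      rw [hg'']
    exact le_iSup₂ (f := fun k (_ : k ∈ ψ ⁻¹' {h' + ψ g}) => 𝒩 k) (g'' + g) h2 h1
  exact hle hx

/-- If `M` is a finitely generated `R`-module, then the sum over `h ∈ H` of the subgroups
of maps homogeneous of degree `h` with respect to the `ψ`-coarsened gradings equals the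
sum over `g ∈ G` of the subgroups of maps homogeneous of degree `g` with respect to the
original gradings. -/
theorem coarsened_graded_hom_eq_of_finite {G H R M N : Type*}
    [AddCommGroup G] [AddCommGroup H] [DecidableEq G] [DecidableEq H] [CommRing R]
    [AddCommGroup M] [Module R M] [AddCommGroup N] [Module R N]
    (ψ : G →+ H) (hψ : Function.Surjective ψ)
    (𝒜 : G → AddSubgroup R) [GradedRing 𝒜]
    (ℳ : G → AddSubgroup M) (𝒩 : G → AddSubgroup N)
    (hM : DirectSum.IsInternal ℳ)
    (hMsmul : ∀ g g' : G, ∀ r ∈ 𝒜 g, ∀ m ∈ ℳ g', r • m ∈ ℳ (g + g'))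
    (hN : DirectSum.IsInternal 𝒩)
    (hNsmul : ∀ g g' : G, ∀ r ∈ 𝒜 g, ∀ n ∈ 𝒩 g', r • n ∈ 𝒩 (g + g'))
    (hfin : Module.Finite R M) :
    (⨆ h : H, homOfDegree (R := R) (AddSubgroup.coarsen ψ ℳ) (AddSubgroup.coarsen ψ 𝒩) h)
      = ⨆ g : G, homOfDegree (R := R) ℳ 𝒩 g := by
  classical
  letI : DirectSum.Decomposition ℳ := hM.chooseDecomposition
  letI : DirectSum.Decomposition 𝒩 := hN.chooseDecomposition
  have htop := iSup_homOfDegree_eq_top 𝒜 ℳ 𝒩 hMsmul hNsmul hfin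
  refine le_antisymm (htop ▸ le_top) ?_
  exact iSup_le fun g =>
    le_trans (homOfDegree_le_coarsen ψ ℳ 𝒩 g) (le_iSup _ (ψ g))
end

section
/- Let K be a field and let R = AddMonoidAlgebra K ℚ≥0 be the algebra over K of the additive monoid ℚ≥0 of nonnegative rational numbers, with canonical basis elements e_α = single α 1 for α ∈ ℚ≥0. Let 𝔪 be the ideal of R generated by { e_α | α ∈ ℚ≥0, α > 0 }. Then 𝔪 is idempotent: 𝔪 * 𝔪 = 𝔪. -/
open scoped NNRat

/-- In the monoid algebra `R = K[ℚ≥0]` of the additive monoid of nonnegative rationals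
over a field `K`, the ideal `𝔪` generated by the elements `e_α = single α 1` with
`α > 0` is idempotent: `𝔪 * 𝔪 = 𝔪`. -/
theorem maximal_graded_ideal_idempotent (K : Type*) [Field K]
    (𝔪 : Ideal (AddMonoidAlgebra K ℚ≥0))
    (h𝔪 : 𝔪 = Ideal.span
      {x : AddMonoidAlgebra K ℚ≥0 | ∃ α : ℚ≥0, 0 < α ∧ x = AddMonoidAlgebra.single α 1}) :
    𝔪 * 𝔪 = 𝔪 := by
  refine le_antisymm (Ideal.mul_le_left.trans le_rfl) ?_
  conv_lhs => rw [h𝔪]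
  rw [Ideal.span_le]
  rintro x ⟨α, hα, rfl⟩
  have hhalf : (0:ℚ≥0) < α / 2 := by positivity
  have hmem : AddMonoidAlgebra.single (α/2) (1:K) ∈ 𝔪 := by
    rw [h𝔪]
    exact Ideal.subset_span ⟨α/2, hhalf, rfl⟩
  have key : (AddMonoidAlgebra.single α (1:K)) =
      AddMonoidAlgebra.single (α/2) 1 * AddMonoidAlgebra.single (α/2) 1 := by
    rw [AddMonoidAlgebra.single_mul_single, one_mul]
    congr 1
    field_simp
    norm_num
  rw [key]
  exact Ideal.mul_mem_mul hmem hmem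
end

section
/- Let K be a field and let R = AddMonoidAlgebra K ℚ≥0 be the algebra over K of the additive monoid ℚ≥0 of nonnegative rational numbers, with canonical basis elements e_α = single α 1 for α ∈ ℚ≥0. Let 𝔪 be the ideal of R generated by { e_α | α ∈ ℚ≥0, α > 0 }. Then 𝔪 is not finitely generated as an ideal of R. -/
open scoped NNRat

/-- Coefficient at 0 of any element of the ideal is zero. -/
lemma coeff_zero_of_mem_span (K : Type*) [Field K]
    (f : AddMonoidAlgebra K ℚ≥0)
    (hf : f ∈ Ideal.span
      {x : AddMonoidAlgebra K ℚ≥0 | ∃ α : ℚ≥0, 0 < α ∧ x = AddMonoidAlgebra.single α 1}) :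
    f.coeff 0 = 0 := by
  refine Submodule.span_induction ?_ ?_ ?_ ?_ hf
  · rintro x ⟨α, hα, rfl⟩
    exact Finsupp.single_eq_of_ne' (fun h => hα.ne' h)
  · rfl
  · intro x y _ _ hx hy
    show (x + y).coeff 0 = 0
    rw [AddMonoidAlgebra.coeff_add, Finsupp.add_apply, hx, hy, add_zero]
  · intro r x _ hx
    rw [smul_eq_mul]
    by_contra h
    have h0 : (0 : ℚ≥0) ∈ (r * x).coeff.support := Finsupp.mem_support_iff.mpr h
    have := AddMonoidAlgebra.support_coeff_mul_subset r x h0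
    rw [Finset.mem_add] at this
    obtain ⟨a, ha, b, hb, hab⟩ := this
    have hb0 : b = 0 := by
      have := add_eq_zero.mp hab
      exact this.2
    rw [hb0, Finsupp.mem_support_iff] at hb
    exact hb hx

/-- In the monoid algebra `R = K[ℚ≥0]` of the additive monoid of nonnegative rationals
over a field `K`, the ideal `𝔪` generated by the elements `e_α = single α 1` with
`α > 0` is not finitely generated. -/
theorem maximal_graded_ideal_not_fg (K : Type*) [Field K]
    (𝔪 : Ideal (AddMonoidAlgebra K ℚ≥0))
    (h𝔪 : 𝔪 = Ideal.span
      {x : AddMonoidAlgebra K ℚ≥0 | ∃ α : ℚ≥0, 0 < α ∧ x = AddMonoidAlgebra.single α 1}) :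
    ¬ 𝔪.FG := by
  rintro ⟨S, hS⟩
  have hgen : ∀ α : ℚ≥0, 0 < α → (AddMonoidAlgebra.single α (1:K)) ∈ 𝔪 := fun α hα => by
    rw [h𝔪]; exact Ideal.subset_span ⟨α, hα, rfl⟩
  have hmemS : ∀ s ∈ S, s ∈ 𝔪 := fun s hs => by
    rw [← hS]; exact Ideal.subset_span hs
  set T : Finset ℚ≥0 := S.biUnion fun s => s.coeff.support with hT
  have hTpos : ∀ β ∈ T, 0 < β := by
    intro β hβ
    rw [hT, Finset.mem_biUnion] at hβ
    obtain ⟨s, hs, hβs⟩ := hβ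
    have h0 : s.coeff 0 = 0 := by
      have := hmemS s hs
      rw [h𝔪] at this
      exact coeff_zero_of_mem_span K s this
    rcases eq_or_lt_of_le (zero_le : (0:ℚ≥0) ≤ β) with h | h
    · exfalso
      rw [← h, Finsupp.mem_support_iff] at hβs
      exact hβs h0
    · exact h
  rcases T.eq_empty_or_nonempty with hTe | hTne
  · -- all generators are zero, but single 1 1 ∈ 𝔪 is nonzero
    have hS0 : ∀ s ∈ S, s = 0 := by
      intro s hs
      have : s.coeff.support = ∅ := by
        apply Finset.eq_empty_of_forall_notMem
        intro β hβ
        have : β ∈ T := by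
          rw [hT, Finset.mem_biUnion]; exact ⟨s, hs, hβ⟩
        rw [hTe] at this; exact absurd this (Finset.notMem_empty β)
      exact AddMonoidAlgebra.coeff_eq_zero.mp (Finsupp.support_eq_empty.mp this)
    have hbot : 𝔪 = ⊥ := by
      rw [← hS]
      exact Ideal.span_eq_bot.mpr hS0
    have h1 : AddMonoidAlgebra.single (1 : ℚ≥0) (1 : K) ∈ 𝔪 := hgen 1 one_pos
    rw [hbot, Ideal.mem_bot] at h1
    exact one_ne_zero (AddMonoidAlgebra.single_eq_zero.mp h1)
  · set ε := T.min' hTne with hε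
    have hεpos : 0 < ε := hTpos ε (T.min'_mem hTne)
    have key : ∀ f ∈ 𝔪, ∀ β ∈ f.coeff.support, ε ≤ β := by
      intro f hf
      rw [← hS] at hf
      refine Submodule.span_induction ?_ ?_ ?_ ?_ hf
      · intro s hs β hβ
        refine T.min'_le β ?_
        rw [hT, Finset.mem_biUnion]; exact ⟨s, hs, hβ⟩
      · intro β hβ
        simp at hβ
      · intro x y _ _ hx hy β hβ
        rw [AddMonoidAlgebra.coeff_add] at hβ
        rcases Finset.mem_union.mp (Finsupp.support_add hβ) with h | h
        · exact hx β h
        · exact hy β h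
      · intro r x _ hx β hβ
        rw [smul_eq_mul] at hβ
        have := AddMonoidAlgebra.support_coeff_mul_subset r x hβ
        rw [Finset.mem_add] at this
        obtain ⟨a, _, b, hb, hab⟩ := this
        calc ε ≤ b := hx b hb
        _ ≤ a + b := le_add_self
        _ = β := hab
    have hhalf : AddMonoidAlgebra.single (ε/2) (1:K) ∈ 𝔪 := hgen _ (by positivity)
    have := key _ hhalf (ε/2) (by
      rw [Finsupp.mem_support_iff, AddMonoidAlgebra.coeff_single, Finsupp.single_eq_same]
      exact one_ne_zero)
    exact absurd this (not_le.mpr (half_lt_self hεpos))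
end
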